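/- Let X be a finite connected poset, f : X → ℝ order preserving, and define m_f(x,y) = max over poset paths γ from x to y of min(f ∘ γ), and g_f(x,y) = (f(x) + f(y) − d_f(x,y))/2. Then m_f(x,y) ≥ g_f(x,y) for all x, y. -/
import Mathlib


open scoped Classical

namespace ReebPoset

variable {X : Type*}

/-- Two elements of a poset are comparable. -/
def Cmp [PartialOrder X] (a b : X) : Prop := a ≤ b ∨ b ≤ a

/-- A poset path from `x` to `y`: a finite sequence of consecutively comparable elements. -/
structure Path [PartialOrder X] (x y : X) where
  n : ℕ
  pts : Fin (n + 1) → X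
  first : pts 0 = x
  last : pts (Fin.last n) = y
  step : ∀ i : Fin n, Cmp (pts i.castSucc) (pts i.succ)

/-- A poset is connected if any two points are joined by a poset path. -/
def Connected (X : Type*) [PartialOrder X] : Prop := ∀ x y : X, Nonempty (Path x y)

/-- The `f`-length of a poset path. -/
noncomputable def flen [PartialOrder X] (f : X → ℝ) {x y : X} (γ : Path x y) : ℝ :=
  ∑ i : Fin γ.n, |f (γ.pts i.succ) - f (γ.pts i.castSucc)|

/-- The metric induced by the filtration `f` (the Reeb metric). -/
noncomputable def df [PartialOrder X] (f : X → ℝ) (x y : X) : ℝ :=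
  sInf {L | ∃ γ : Path x y, L = flen f γ}

/-- The Gromov product associated to `f`. -/
noncomputable def gf [PartialOrder X] (f : X → ℝ) (x y : X) : ℝ :=
  (f x + f y - df f x y) / 2

/-- The poset hyperbolicity of `(X, f)`. -/
noncomputable def hypf (X : Type*) [PartialOrder X] (f : X → ℝ) : ℝ :=
  sInf {ε : ℝ | 0 ≤ ε ∧ ∀ x y z : X, gf f x z ≥ min (gf f x y) (gf f y z) - ε}

/-- The merge value `m_f(x,y)`: max over poset paths of the min of `f` along the path. -/
noncomputable def mf [PartialOrder X] (f : X → ℝ) (x y : X) : ℝ :=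
  sSup {m | ∃ γ : Path x y,
    m = Finset.univ.inf' Finset.univ_nonempty (fun i : Fin (γ.n + 1) => f (γ.pts i))}

/-- A poset path is a fence if its points are distinct and non-consecutive points
are incomparable. -/
def IsFence [PartialOrder X] {x y : X} (γ : Path x y) : Prop :=
  Function.Injective γ.pts ∧
  ∀ i j : Fin (γ.n + 1), (i : ℕ) + 2 ≤ (j : ℕ) → ¬ Cmp (γ.pts i) (γ.pts j)

/-- The maximal length of a fence in the poset `X`. -/
noncomputable def MF (X : Type*) [PartialOrder X] : ℕ :=
  sSup {n : ℕ | ∃ x y : X, ∃ γ : Path x y, IsFence γ ∧ γ.n = n}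

/-- A merging point: an element covering at least two distinct elements. -/
def Merging [PartialOrder X] (x : X) : Prop := ∃ y z : X, y ≠ z ∧ y ⋖ x ∧ z ⋖ x

/-- A poset is a tree if every down-set is a chain. -/
def IsTreePoset (X : Type*) [PartialOrder X] : Prop :=
  ∀ a b c : X, a ≤ c → b ≤ c → (a ≤ b ∨ b ≤ a)

/-- The covering graph of a poset. -/
def covGraph (X : Type*) [PartialOrder X] : SimpleGraph X :=
  SimpleGraph.fromRel (fun a b => a ⋖ b)

/-- The number of elements covered by `x`. -/
noncomputable def iota [PartialOrder X] [Fintype X] (x : X) : ℕ :=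
  (Finset.univ.filter (fun y => y ⋖ x)).card

/-- The first Betti number of a graph: the minimal number of edges one needs to remove
to obtain a tree. -/
noncomputable def betti (G : SimpleGraph X) : ℕ :=
  sInf {k | ∃ s : Set (Sym2 X), s.ncard = k ∧ (G.deleteEdges s).IsTree}

/-- `x ∼ y` iff some poset path from `x` to `y` is `f`-constant. -/
def constRel [PartialOrder X] (f : X → ℝ) (x y : X) : Prop :=
  ∃ γ : Path x y, ∀ i : Fin (γ.n + 1), f (γ.pts i) = f x

/-- `[x] ≤ [y]` in the Reeb poset iff some poset path from `x` to `y` is `f`-nondecreasing. -/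
def ndRel [PartialOrder X] (f : X → ℝ) (x y : X) : Prop :=
  ∃ γ : Path x y, ∀ i : Fin γ.n, f (γ.pts i.castSucc) ≤ f (γ.pts i.succ)

/-- `x ∼ y` in the Reeb tree construction: some poset path from `x` to `y` has all
`f`-values at least `max (f x) (f y)`. -/
def treeEq [PartialOrder X] (f : X → ℝ) (x y : X) : Prop :=
  ∃ γ : Path x y, ∀ i : Fin (γ.n + 1), max (f x) (f y) ≤ f (γ.pts i)

/-- `[x] ≤ [y]` in the Reeb tree poset: some poset path from `x` to `y` has all
`f`-values at least `f x`. -/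
def treeLe [PartialOrder X] (f : X → ℝ) (x y : X) : Prop :=
  ∃ γ : Path x y, ∀ i : Fin (γ.n + 1), f x ≤ f (γ.pts i)

end ReebPoset

private lemma tele_aux (g : ℕ → ℝ) {a b : ℕ} (h : a ≤ b) :
    |g b - g a| ≤ ∑ i ∈ Finset.Ico a b, |g (i + 1) - g i| := by
  have h1 : ∑ i ∈ Finset.Ico a b, (g (i + 1) - g i) = g b - g a := by
    rw [Finset.sum_Ico_eq_sub _ h, Finset.sum_range_sub, Finset.sum_range_sub]
    ring
  calc |g b - g a| = |∑ i ∈ Finset.Ico a b, (g (i + 1) - g i)| := by rw [h1]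
    _ ≤ ∑ i ∈ Finset.Ico a b, |g (i + 1) - g i| := Finset.abs_sum_le_sum_abs _ _

private lemma flen_lower {X : Type*} [PartialOrder X] (f : X → ℝ) {x y : X}
    (γ : ReebPoset.Path x y) :
    f x + f y - 2 * (Finset.univ.inf' Finset.univ_nonempty
      (fun i : Fin (γ.n + 1) => f (γ.pts i))) ≤ ReebPoset.flen f γ := by
  set n := γ.n with hn
  set g : ℕ → ℝ := fun i => f (γ.pts ⟨min i n, by omega⟩) with hg
  have hflen : ReebPoset.flen f γ = ∑ i ∈ Finset.range n, |g (i + 1) - g i| := by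
    rw [ReebPoset.flen, ← Fin.sum_univ_eq_sum_range (fun i => |g (i + 1) - g i|) n]
    apply Finset.sum_congr rfl
    intro i _
    have e1 : γ.pts i.succ = γ.pts ⟨min ((i : ℕ) + 1) n, by omega⟩ := by
      congr 1; apply Fin.ext; simp only [Fin.val_succ]; omega
    have e2 : γ.pts i.castSucc = γ.pts ⟨min (i : ℕ) n, by omega⟩ := by
      congr 1; apply Fin.ext; simp only [Fin.coe_castSucc]; omega
    rw [e1, e2]
  obtain ⟨k, -, hk⟩ := Finset.exists_mem_eq_inf' (Finset.univ_nonempty)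
    (fun i : Fin (γ.n + 1) => f (γ.pts i))
  have hg0 : g 0 = f x := by
    simp only [hg]
    rw [show (⟨min 0 n, by omega⟩ : Fin (n+1)) = 0 by simp [Fin.ext_iff], γ.first]
  have hgn : g n = f y := by
    simp only [hg]
    rw [show (⟨min n n, by omega⟩ : Fin (n+1)) = Fin.last n by simp [Fin.ext_iff], γ.last]
  have hgk : g k = f (γ.pts k) := by
    simp only [hg]
    have e : (⟨min (k : ℕ) n, by omega⟩ : Fin (n + 1)) = k := by
      apply Fin.ext; simp; omega
    rw [e]
  have hkn : (k : ℕ) ≤ n := by omega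
  have hsplit : ∑ i ∈ Finset.range n, |g (i + 1) - g i| =
      (∑ i ∈ Finset.Ico 0 (k : ℕ), |g (i + 1) - g i|) +
      ∑ i ∈ Finset.Ico (k : ℕ) n, |g (i + 1) - g i| := by
    rw [Finset.sum_Ico_consecutive _ (Nat.zero_le _) hkn, Finset.range_eq_Ico]
  have h1 : |g k - g 0| ≤ ∑ i ∈ Finset.Ico 0 (k : ℕ), |g (i + 1) - g i| :=
    tele_aux g (Nat.zero_le _)
  have h2 : |g n - g k| ≤ ∑ i ∈ Finset.Ico (k : ℕ) n, |g (i + 1) - g i| :=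
    tele_aux g hkn
  have ha : f x - f (γ.pts k) ≤ |g (k : ℕ) - g 0| := by
    rw [hg0, hgk, abs_sub_comm]; exact le_abs_self _
  have hb : f y - f (γ.pts k) ≤ |g n - g (k : ℕ)| := by
    rw [hgn, hgk]; exact le_abs_self _
  rw [hflen, hsplit, hk]
  linarith

open ReebPoset in
/-- `m_f(x,y) ≥ g_f(x,y)` for all `x, y`. -/
theorem stmt17 {X : Type*} [PartialOrder X] [Fintype X]
    (hc : Connected X) (f : X → ℝ) (hm : Monotone f) (x y : X) :
    gf f x y ≤ mf f x y := by
  set M : Set ℝ := {m | ∃ γ : Path x y,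
    m = Finset.univ.inf' Finset.univ_nonempty (fun i : Fin (γ.n + 1) => f (γ.pts i))} with hM
  have hbdd : BddAbove M := by
    refine ⟨f x, ?_⟩
    rintro m ⟨γ, rfl⟩
    calc Finset.univ.inf' Finset.univ_nonempty (fun i : Fin (γ.n + 1) => f (γ.pts i))
        ≤ f (γ.pts 0) := Finset.inf'_le _ (Finset.mem_univ _)
      _ = f x := by rw [γ.first]
  have hdf : f x + f y - 2 * mf f x y ≤ df f x y := by
    obtain ⟨γ0⟩ := hc x y
    unfold df
    refine le_csInf ⟨ReebPoset.flen f γ0, ⟨γ0, rfl⟩⟩ ?_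
    rintro L ⟨γ, rfl⟩
    have h1 := flen_lower f γ
    have h2 : Finset.univ.inf' Finset.univ_nonempty (fun i : Fin (γ.n + 1) => f (γ.pts i))
        ≤ mf f x y := le_csSup hbdd ⟨γ, rfl⟩
    linarith
  rw [gf]
  linarith
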